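/- For all α, s ∈ ℝ, let R(α) := (cosh(2α))^(−1/2) • ![![cosh α, sinh α], ![−sinh α, cosh α]] and σ̄ := s • ![![0, 1], ![1, 0]] (2×2 real matrices). Then R(α)·σ̄·R(α)ᵀ = ![![s·tanh(2α), s/cosh(2α)], ![s/cosh(2α), −s·tanh(2α)]]. In particular, if a material under RFSS deformation has the Lagrangian pure shear rotated Cauchy stress σ̄ with σ̄₁₂ = s, then its Cauchy stress components are σ₁₂ = s/cosh(2α), σ₁₁ = s·tanh(2α), σ₂₂ = −σ₁₁. -/

import Mathlib

open Matrix Real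

/-- Eq. (4-13): the Cauchy stress obtained by rotating a Lagrangian pure shear
rotated Cauchy stress `σ̄` under RFSS deformation:
`σ₁₂ = s/cosh 2α`, `σ₁₁ = s·tanh 2α`, `σ₂₂ = −σ₁₁`. -/
theorem rfss_cauchy_stress_from_lagrangian_pure_shear (α s : ℝ) :
    let R : Matrix (Fin 2) (Fin 2) ℝ :=
      (Real.sqrt (Real.cosh (2*α)))⁻¹ • !![Real.cosh α, Real.sinh α; -Real.sinh α, Real.cosh α]
    let σbar : Matrix (Fin 2) (Fin 2) ℝ := s • !![0, 1; 1, 0]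
    R * σbar * Rᵀ =
      !![s * Real.tanh (2*α), s / Real.cosh (2*α);
         s / Real.cosh (2*α), -(s * Real.tanh (2*α))] := by
  intro R σbar
  have hc : Real.cosh (2*α) > 0 := Real.cosh_pos _
  have hsq : Real.sqrt (Real.cosh (2*α)) * Real.sqrt (Real.cosh (2*α)) = Real.cosh (2*α) :=
    Real.mul_self_sqrt hc.le
  have hspos : Real.sqrt (Real.cosh (2*α)) > 0 := Real.sqrt_pos.mpr hc
  have h2 : Real.cosh (2*α) = Real.cosh α ^ 2 + Real.sinh α ^ 2 := by
    rw [two_mul, Real.cosh_add]; ring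
  have h3 : Real.sinh (2*α) = 2 * Real.sinh α * Real.cosh α := by
    rw [two_mul, Real.sinh_add]; ring
  have h4 : Real.cosh α ^ 2 - Real.sinh α ^ 2 = 1 := by
    have := Real.cosh_sq_sub_sinh_sq α; nlinarith [this]
  simp only [R, σbar]
  ext i j
  fin_cases i <;> fin_cases j <;>
    simp [Matrix.mul_apply, Fin.sum_univ_two, Matrix.vecHead, Matrix.transpose_apply,
      Real.tanh_eq_sinh_div_cosh] <;>
    field_simp <;>
    simp only [Real.sq_sqrt hc.le] <;>
    first
      | linear_combination -s * Real.cosh (2*α) * h3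
      | linear_combination s * Real.cosh (2*α) * h3
      | linear_combination s * Real.cosh (2*α) * h4
      | linear_combination s * h3
      | linear_combination -s * h3
      | linear_combination s * h4
      | linear_combination s * Real.cosh (2*α)^2 * h4
      | linear_combination s * Real.cosh (2*α)^2 * h3
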